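/- Let α ∈ (0,1) be irrational, let n ≥ 2 and m ≥ 2 be integers, let S_0 ⊆ [0,n) be Lebesgue measurable, and let 0 < ε < 1/100. For each integer k ≥ 1 set d*_k = 1 − max{ {qα} : −1 ≤ q ≤ q_{k+1}−2, q ≠ 0 } and d**_k = min{ {qα} : −1 ≤ q ≤ q_{k+1}−2, q ≠ 0 }, and for m ≤ q ≤ q_{k+1}−2 let J_k(q) = ({qα} − d**_k, {qα} + d*_k). Then there is a threshold K such that for every k ≥ K there exists an integer q* with m ≤ q* ≤ q_{k+1}−2 such that for each ℓ = 0,1,…,n−1, either λ((ℓ+J_k(q*)) ∩ S_0) > (1−ε)·λ(J_k(q*)) or λ((ℓ+J_k(q*)) ∩ S_0) < ε·λ(J_k(q*)), where λ denotes one-dimensional Lebesgue measure and ℓ+J_k(q*) is the translate of the interval J_k(q*) by ℓ. -/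

import Mathlib

open scoped Classical
open MeasureTheory

/-- Iterates of the Gauss map starting at `α`. -/
noncomputable def gaussIter (α : ℝ) : ℕ → ℝ
  | 0 => α
  | k + 1 => Int.fract (1 / gaussIter α k)

/-- For `α ∈ (0,1)` irrational, `cfDigit α i` is the `i`-th digit `a_i` (for `i ≥ 1`)
of the continued fraction expansion `α = [a_1, a_2, a_3, …]`. -/
noncomputable def cfDigit (α : ℝ) (i : ℕ) : ℕ :=
  (⌊1 / gaussIter α (i - 1)⌋).toNat

/-- The denominators `q_k` of the convergents of `α`. -/
noncomputable def qDen (α : ℝ) : ℕ → ℕ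
  | 0 => 1
  | 1 => cfDigit α 1
  | k + 2 => cfDigit α (k + 2) * qDen α (k + 1) + qDen α k

/-- `d*_k = 1 − max{ {qα} : −1 ≤ q ≤ q_{k+1}−2, q ≠ 0 }`: the gap immediately below
`0` in the partition of the circle by the points `{qα}`, `−1 ≤ q ≤ q_{k+1}−2`. -/
noncomputable def dStar (α : ℝ) (k : ℕ) : ℝ :=
  1 - sSup {x : ℝ | ∃ q : ℤ, -1 ≤ q ∧ q ≤ (qDen α (k + 1) : ℤ) - 2 ∧ q ≠ 0 ∧
    x = Int.fract ((q : ℝ) * α)}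

/-- `d**_k = min{ {qα} : −1 ≤ q ≤ q_{k+1}−2, q ≠ 0 }`: the gap immediately above `0`. -/
noncomputable def dStarStar (α : ℝ) (k : ℕ) : ℝ :=
  sInf {x : ℝ | ∃ q : ℤ, -1 ≤ q ∧ q ≤ (qDen α (k + 1) : ℤ) - 2 ∧ q ≠ 0 ∧
    x = Int.fract ((q : ℝ) * α)}

/-- The short special interval `J_k(q) = ({qα} − d**_k, {qα} + d*_k)`. -/
noncomputable def shortInterval (α : ℝ) (k q : ℕ) : Set ℝ :=
  Set.Ioo (Int.fract ((q : ℝ) * α) - dStarStar α k) (Int.fract ((q : ℝ) * α) + dStar α k)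

namespace AZOL

noncomputable def pNum (α : ℝ) : ℕ → ℤ
  | 0 => 0
  | 1 => 1
  | k + 2 => (cfDigit α (k + 2) : ℤ) * pNum α (k + 1) + pNum α k

def Mset (α : ℝ) (k : ℕ) : Set ℝ :=
  {x : ℝ | ∃ q : ℤ, -1 ≤ q ∧ q ≤ (qDen α (k + 1) : ℤ) - 2 ∧ q ≠ 0 ∧
    x = Int.fract ((q : ℝ) * α)}

noncomputable def Piq (α : ℝ) (k : ℕ) : ℝ := ∏ j ∈ Finset.range (k + 1), gaussIter α j

lemma abs_add_eq_of_mul_nonneg {a b : ℝ} (h : 0 ≤ a * b) : |a + b| = |a| + |b| := by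
  rcases mul_nonneg_iff.1 h with ⟨ha, hb⟩ | ⟨ha, hb⟩
  · rw [abs_of_nonneg ha, abs_of_nonneg hb, abs_of_nonneg (by linarith)]
  · rw [abs_of_nonpos ha, abs_of_nonpos hb, abs_of_nonpos (by linarith)]
    ring

section CF

variable {α : ℝ} (hirr : Irrational α) (h0 : 0 < α) (h1 : α < 1)

include hirr h0 h1

lemma gauss_props : ∀ k, Irrational (gaussIter α k) ∧ 0 < gaussIter α k ∧ gaussIter α k < 1 := by
  intro k
  induction k with
  | zero => exact ⟨hirr, h0, h1⟩
  | succ k ih =>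
    obtain ⟨hi, hp, _⟩ := ih
    have h1x : Irrational (1 / gaussIter α k) := by
      rw [one_div]; exact irrational_inv_iff.2 hi
    have hfr : Irrational (Int.fract (1 / gaussIter α k)) := by
      rw [Int.fract]; exact Irrational.sub_intCast h1x _
    have hg : gaussIter α (k + 1) = Int.fract (1 / gaussIter α k) := rfl
    refine ⟨by rw [hg]; exact hfr, ?_, by rw [hg]; exact Int.fract_lt_one _⟩
    rw [hg, Int.fract_pos]
    exact h1x.ne_int _

lemma gauss_pos (k : ℕ) : 0 < gaussIter α k := (gauss_props hirr h0 h1 k).2.1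
lemma gauss_lt_one (k : ℕ) : gaussIter α k < 1 := (gauss_props hirr h0 h1 k).2.2

lemma one_le_floor_gauss (k : ℕ) : 1 ≤ ⌊1 / gaussIter α k⌋ := by
  rw [Int.le_floor]
  have hp := gauss_pos hirr h0 h1 k
  have hl := gauss_lt_one hirr h0 h1 k
  push_cast
  rw [le_div_iff₀ hp]
  linarith

lemma cfDigit_cast (k : ℕ) : ((cfDigit α (k + 1) : ℤ)) = ⌊1 / gaussIter α k⌋ := by
  have : cfDigit α (k + 1) = (⌊1 / gaussIter α k⌋).toNat := by simp [cfDigit]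
  rw [this, Int.toNat_of_nonneg (le_trans (by norm_num) (one_le_floor_gauss hirr h0 h1 k))]

lemma one_le_cfDigit (k : ℕ) : 1 ≤ cfDigit α (k + 1) := by
  have := cfDigit_cast hirr h0 h1 k
  have h2 := one_le_floor_gauss hirr h0 h1 k
  omega

lemma gauss_succ (k : ℕ) : gaussIter α (k + 1) = 1 / gaussIter α k - (cfDigit α (k + 1) : ℝ) := by
  have hg : gaussIter α (k + 1) = Int.fract (1 / gaussIter α k) := rfl
  rw [hg, Int.fract]
  congr 1
  rw [← cfDigit_cast hirr h0 h1 k]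
  push_cast
  ring

lemma key_prod (k : ℕ) :
    gaussIter α k * gaussIter α (k + 1) = 1 - (cfDigit α (k + 1) : ℝ) * gaussIter α k := by
  rw [gauss_succ hirr h0 h1 k]
  have hne : gaussIter α k ≠ 0 := (gauss_pos hirr h0 h1 k).ne'
  field_simp

omit hirr h0 h1 in
lemma Piq_succ (k : ℕ) : Piq α (k + 1) = Piq α k * gaussIter α (k + 1) :=
  Finset.prod_range_succ _ _

lemma Piq_pos (k : ℕ) : 0 < Piq α k :=
  Finset.prod_pos fun j _ => gauss_pos hirr h0 h1 j

lemma Piq_lt (k : ℕ) : Piq α (k + 1) < Piq α k := by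
  rw [Piq_succ]
  nlinarith [Piq_pos hirr h0 h1 k, gauss_lt_one hirr h0 h1 (k + 1), gauss_pos hirr h0 h1 (k + 1)]

lemma Piq_anti : StrictAnti (Piq α) :=
  strictAnti_nat_of_succ_lt (Piq_lt hirr h0 h1)

lemma theta_eq : ∀ k, (qDen α k : ℝ) * α - (pNum α k : ℝ) = (-1 : ℝ) ^ k * Piq α k := by
  have key : ∀ k, ((qDen α k : ℝ) * α - (pNum α k : ℝ) = (-1 : ℝ) ^ k * Piq α k) ∧
      ((qDen α (k + 1) : ℝ) * α - (pNum α (k + 1) : ℝ) = (-1 : ℝ) ^ (k + 1) * Piq α (k + 1)) := by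
    intro k
    induction k with
    | zero =>
      have hα : α ≠ 0 := ne_of_gt h0
      constructor
      · simp [qDen, pNum, Piq, gaussIter]
      · have hg1 := gauss_succ hirr h0 h1 0
        simp only [show gaussIter α 0 = α from rfl] at hg1
        have hP : Piq α 1 = α * gaussIter α 1 := by
          rw [Piq_succ]
          simp [Piq, gaussIter]
        rw [show qDen α 1 = cfDigit α 1 from rfl, show pNum α 1 = 1 from rfl, hP, hg1]
        field_simp
        ring
    | succ k ih =>
      refine ⟨ih.2, ?_⟩
      have hq2 : ((qDen α (k + 2) : ℕ) : ℝ)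
          = (cfDigit α (k + 2) : ℝ) * (qDen α (k + 1) : ℝ) + (qDen α k : ℝ) := by
        rw [show qDen α (k + 2) = cfDigit α (k + 2) * qDen α (k + 1) + qDen α k from rfl]
        push_cast; ring
      have hp2 : ((pNum α (k + 2) : ℤ) : ℝ)
          = (cfDigit α (k + 2) : ℝ) * (pNum α (k + 1) : ℝ) + (pNum α k : ℝ) := by
        rw [show pNum α (k + 2) = (cfDigit α (k + 2) : ℤ) * pNum α (k + 1) + pNum α k from rfl]
        push_cast; ring
      have h2 := ih.2
      rw [Piq_succ] at h2
      have kp := key_prod hirr h0 h1 (k + 1)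
      rw [hq2, hp2, Piq_succ, Piq_succ]
      linear_combination (cfDigit α (k + 2) : ℝ) * h2 + ih.1
        - ((-1 : ℝ) ^ k * Piq α k) * kp
  exact fun k => (key k).1

omit hirr h0 h1 in
lemma det_eq : ∀ k, (qDen α (k + 1) : ℤ) * pNum α k - (qDen α k : ℤ) * pNum α (k + 1)
    = (-1) ^ (k + 1) := by
  intro k
  induction k with
  | zero => simp [qDen, pNum]
  | succ k ih =>
    rw [show qDen α (k + 2) = cfDigit α (k + 2) * qDen α (k + 1) + qDen α k from rfl,
      show pNum α (k + 2) = (cfDigit α (k + 2) : ℤ) * pNum α (k + 1) + pNum α k from rfl]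
    push_cast
    linear_combination (-1 : ℤ) * ih

lemma one_le_qDen : ∀ k, 1 ≤ qDen α k := by
  have key : ∀ k, 1 ≤ qDen α k ∧ 1 ≤ qDen α (k + 1) := by
    intro k
    induction k with
    | zero =>
      refine ⟨le_refl _, ?_⟩
      exact one_le_cfDigit hirr h0 h1 0
    | succ k ih =>
      refine ⟨ih.2, ?_⟩
      rw [show qDen α (k + 2) = cfDigit α (k + 2) * qDen α (k + 1) + qDen α k from rfl]
      have := ih.1
      omega
  exact fun k => (key k).1

lemma qDen_le_succ : ∀ k, qDen α k ≤ qDen α (k + 1) := by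
  intro k
  cases k with
  | zero =>
    rw [show qDen α 0 = 1 from rfl, show qDen α 1 = cfDigit α 1 from rfl]
    exact one_le_cfDigit hirr h0 h1 0
  | succ k =>
    rw [show qDen α (k + 2) = cfDigit α (k + 2) * qDen α (k + 1) + qDen α k from rfl]
    have h1' := one_le_cfDigit hirr h0 h1 (k + 1)
    have h2' := one_le_qDen hirr h0 h1 (k + 1)
    nlinarith

lemma qDen_ge : ∀ k, k ≤ qDen α (k + 1) := by
  have key : ∀ k, (k ≤ qDen α (k + 1)) ∧ (k + 1 ≤ qDen α (k + 2)) := by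
    intro k
    induction k with
    | zero => exact ⟨Nat.zero_le _, one_le_qDen hirr h0 h1 2⟩
    | succ k ih =>
      refine ⟨ih.2, ?_⟩
      rw [show qDen α (k + 3) = cfDigit α (k + 3) * qDen α (k + 2) + qDen α (k + 1) from rfl]
      have h1' := one_le_cfDigit hirr h0 h1 (k + 2)
      have h2' := ih.2
      have h3' := one_le_qDen hirr h0 h1 (k + 1)
      nlinarith
  exact fun k => (key k).1

lemma sum_identity (k : ℕ) :
    (qDen α (k + 1) : ℝ) * Piq α k + (qDen α k : ℝ) * Piq α (k + 1) = 1 := by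
  have ha := theta_eq hirr h0 h1 k
  have hb := theta_eq hirr h0 h1 (k + 1)
  have hd := det_eq (α := α) k
  have hdr : (qDen α (k + 1) : ℝ) * (pNum α k : ℝ) - (qDen α k : ℝ) * (pNum α (k + 1) : ℝ)
      = (-1 : ℝ) ^ (k + 1) := by exact_mod_cast hd
  rcases Nat.even_or_odd k with he | he
  · rw [he.neg_one_pow] at ha
    rw [(he.add_one).neg_one_pow] at hb hdr
    linear_combination -((qDen α (k + 1) : ℝ)) * ha + (qDen α k : ℝ) * hb - hdr
  · rw [he.neg_one_pow] at ha
    rw [(Odd.add_one he).neg_one_pow] at hb hdr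
    linear_combination (qDen α (k + 1) : ℝ) * ha - (qDen α k : ℝ) * hb + hdr

lemma Piq_le_inv (k : ℕ) : Piq α k ≤ 1 / (qDen α (k + 1) : ℝ) := by
  have hs := sum_identity hirr h0 h1 k
  have h2' : (0 : ℝ) < (qDen α (k + 1) : ℝ) := by
    exact_mod_cast Nat.lt_of_lt_of_le Nat.zero_lt_one (one_le_qDen hirr h0 h1 (k + 1))
  have h3' : (0 : ℝ) ≤ (qDen α k : ℝ) := by positivity
  have h4' := Piq_pos hirr h0 h1 (k + 1)
  rw [le_div_iff₀ h2']
  nlinarith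

lemma inv_le_Piq (k : ℕ) : 1 / (2 * (qDen α (k + 1) : ℝ)) ≤ Piq α k := by
  have hs := sum_identity hirr h0 h1 k
  have h2' : (0 : ℝ) < (qDen α (k + 1) : ℝ) := by
    exact_mod_cast Nat.lt_of_lt_of_le Nat.zero_lt_one (one_le_qDen hirr h0 h1 (k + 1))
  have hmono : (qDen α k : ℝ) ≤ (qDen α (k + 1) : ℝ) := by
    exact_mod_cast qDen_le_succ hirr h0 h1 k
  have hPmono : Piq α (k + 1) ≤ Piq α k := le_of_lt (Piq_lt hirr h0 h1 k)
  have h4' := Piq_pos hirr h0 h1 (k + 1)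
  rw [div_le_iff₀ (by positivity)]
  nlinarith

lemma best_approx (k : ℕ) (q p : ℤ) (hq1 : 1 ≤ q) (hqQ : q < (qDen α (k + 1) : ℤ)) :
    Piq α k ≤ |(q : ℝ) * α - (p : ℝ)| := by
  have hd := det_eq (α := α) k
  obtain ⟨Q0, hQ0⟩ : ∃ Q0 : ℤ, Q0 = (qDen α k : ℤ) := ⟨_, rfl⟩
  obtain ⟨Q1, hQ1⟩ : ∃ Q1 : ℤ, Q1 = (qDen α (k + 1) : ℤ) := ⟨_, rfl⟩
  obtain ⟨P0, hP0⟩ : ∃ P0 : ℤ, P0 = pNum α k := ⟨_, rfl⟩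
  obtain ⟨P1, hP1⟩ : ∃ P1 : ℤ, P1 = pNum α (k + 1) := ⟨_, rfl⟩
  obtain ⟨D, hD⟩ : ∃ D : ℤ, D = (-1) ^ (k + 1) := ⟨_, rfl⟩
  rw [← hQ0, ← hQ1, ← hP0, ← hP1, ← hD] at hd
  have hDD : D * D = 1 := by
    rw [hD, ← pow_add]
    exact Even.neg_one_pow ⟨k + 1, by ring⟩
  obtain ⟨x, hx⟩ : ∃ x : ℤ, x = D * (p * Q1 - q * P1) := ⟨_, rfl⟩
  obtain ⟨y, hy⟩ : ∃ y : ℤ, y = D * (q * P0 - p * Q0) := ⟨_, rfl⟩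
  have hqxy : x * Q0 + y * Q1 = q := by
    linear_combination Q0 * hx + Q1 * hy + (q * D) * hd + q * hDD
  have hpxy : x * P0 + y * P1 = p := by
    linear_combination P0 * hx + P1 * hy + (p * D) * hd + p * hDD
  have hqr : (x : ℝ) * ((qDen α k : ℕ) : ℝ) + (y : ℝ) * ((qDen α (k + 1) : ℕ) : ℝ) = (q : ℝ) := by
    rw [hQ0, hQ1] at hqxy
    exact_mod_cast hqxy
  have hpr : (x : ℝ) * ((pNum α k : ℤ) : ℝ) + (y : ℝ) * ((pNum α (k + 1) : ℤ) : ℝ) = (p : ℝ) := by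
    rw [hP0, hP1] at hpxy
    exact_mod_cast hpxy
  have ht0 := theta_eq hirr h0 h1 k
  have ht1 := theta_eq hirr h0 h1 (k + 1)
  have hreal : (q : ℝ) * α - (p : ℝ)
      = (x : ℝ) * ((-1 : ℝ) ^ k * Piq α k) + (y : ℝ) * ((-1 : ℝ) ^ (k + 1) * Piq α (k + 1)) := by
    rw [← ht0, ← ht1]
    linear_combination hpr - α * hqr
  have hQ0pos : (1 : ℤ) ≤ Q0 := by rw [hQ0]; exact_mod_cast one_le_qDen hirr h0 h1 k
  have hQ1pos : (1 : ℤ) ≤ Q1 := by rw [hQ1]; exact_mod_cast one_le_qDen hirr h0 h1 (k + 1)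
  have hPk := Piq_pos hirr h0 h1 k
  have hPk1 := Piq_pos hirr h0 h1 (k + 1)
  have habs0 : |(-1 : ℝ) ^ k * Piq α k| = Piq α k := by
    rw [abs_mul, abs_pow, abs_neg, abs_one, one_pow, one_mul, abs_of_pos hPk]
  have habs1 : |(-1 : ℝ) ^ (k + 1) * Piq α (k + 1)| = Piq α (k + 1) := by
    rw [abs_mul, abs_pow, abs_neg, abs_one, one_pow, one_mul, abs_of_pos hPk1]
  have hqQ' : q < Q1 := by rw [hQ1]; exact hqQ
  by_cases hy0 : y = 0
  · have hxq : x * Q0 = q := by rw [← hqxy, hy0]; ring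
    have hx1 : 1 ≤ x := by
      by_contra hcon
      push_neg at hcon
      have hxle : x ≤ 0 := by omega
      nlinarith
    have hx1r : (1 : ℝ) ≤ |(x : ℝ)| := by
      rw [← Int.cast_abs]
      exact_mod_cast le_trans hx1 (le_abs_self x)
    rw [hreal, hy0]
    simp only [Int.cast_zero, zero_mul, add_zero]
    rw [abs_mul, habs0]
    calc Piq α k = 1 * Piq α k := (one_mul _).symm
      _ ≤ |(x : ℝ)| * Piq α k := mul_le_mul_of_nonneg_right hx1r hPk.le
  · by_cases hx0 : x = 0
    · exfalso
      have hyq : y * Q1 = q := by rw [← hqxy, hx0]; ring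
      have hy1 : 1 ≤ y := by
        by_contra hcon
        push_neg at hcon
        have hyle : y ≤ 0 := by omega
        nlinarith
      nlinarith [mul_le_mul_of_nonneg_right hy1 (show (0 : ℤ) ≤ Q1 by omega)]
    · have hxy : x * y < 0 := by
        have hxQeq : x * Q0 = q - y * Q1 := by linarith [hqxy]
        rcases lt_or_gt_of_ne hy0 with hneg | hpos
        · have hyle : y ≤ -1 := by omega
          have h5 : y * Q1 ≤ -1 * Q1 := mul_le_mul_of_nonneg_right hyle (by omega)
          have h6 : 0 < x * Q0 := by linarith
          have h7 : 0 < x := by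
            by_contra hcon
            push_neg at hcon
            nlinarith
          exact mul_neg_of_pos_of_neg h7 hneg
        · have hyge : 1 ≤ y := hpos
          have h5 : 1 * Q1 ≤ y * Q1 := mul_le_mul_of_nonneg_right hyge (by omega)
          have h6 : x * Q0 < 0 := by linarith
          have h7 : x < 0 := by
            by_contra hcon
            push_neg at hcon
            nlinarith
          exact mul_neg_of_neg_of_pos h7 hpos
      have hsign : ((-1 : ℝ) ^ k) * ((-1 : ℝ) ^ (k + 1)) = -1 := by
        rw [← pow_add]
        exact Odd.neg_one_pow ⟨k, by ring⟩
      have hxyr : ((x * y : ℤ) : ℝ) < 0 := by exact_mod_cast hxy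
      have heq : ((x : ℝ) * ((-1 : ℝ) ^ k * Piq α k))
            * ((y : ℝ) * ((-1 : ℝ) ^ (k + 1) * Piq α (k + 1)))
          = (-(((x * y : ℤ) : ℝ))) * (Piq α k * Piq α (k + 1)) := by
        push_cast
        linear_combination ((x : ℝ) * (y : ℝ) * Piq α k * Piq α (k + 1)) * hsign
      have hprod : 0 ≤ ((x : ℝ) * ((-1 : ℝ) ^ k * Piq α k))
          * ((y : ℝ) * ((-1 : ℝ) ^ (k + 1) * Piq α (k + 1))) := by
        rw [heq]
        exact mul_nonneg (by linarith) (mul_pos hPk hPk1).le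
      have hx1r : (1 : ℝ) ≤ |(x : ℝ)| := by
        rw [← Int.cast_abs]
        have : 1 ≤ |x| := Int.one_le_abs (by intro hc; rw [hc] at hxy; simp at hxy)
        exact_mod_cast this
      rw [hreal, abs_add_eq_of_mul_nonneg hprod, abs_mul ((x : ℝ)) _, habs0]
      calc Piq α k = 1 * Piq α k := (one_mul _).symm
        _ ≤ |(x : ℝ)| * Piq α k := mul_le_mul_of_nonneg_right hx1r hPk.le
        _ ≤ _ := le_add_of_nonneg_right (abs_nonneg _)


lemma approx_all (k : ℕ) (q : ℤ) (hq0 : q ≠ 0) (hqQ : |q| < (qDen α (k + 1) : ℤ)) (p : ℤ) :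
    Piq α k ≤ |(q : ℝ) * α - (p : ℝ)| := by
  rcases lt_or_gt_of_ne hq0 with hneg | hpos
  · have hqq : 1 ≤ -q := by omega
    have hqq2 : -q < (qDen α (k + 1) : ℤ) := by rw [abs_of_neg hneg] at hqQ; omega
    have h := best_approx hirr h0 h1 k (-q) (-p) hqq hqq2
    push_cast at h
    rwa [show (-(q : ℝ)) * α - (-(p : ℝ)) = -((q : ℝ) * α - (p : ℝ)) by ring, abs_neg] at h
  · exact best_approx hirr h0 h1 k q p hpos (by rw [abs_of_pos hpos] at hqQ; omega)

lemma fract_ge (k : ℕ) (q : ℤ) (hq0 : q ≠ 0) (hqQ : |q| < (qDen α (k + 1) : ℤ)) :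
    Piq α k ≤ Int.fract ((q : ℝ) * α) := by
  have h := approx_all hirr h0 h1 k q hq0 hqQ ⌊(q : ℝ) * α⌋
  rwa [Int.self_sub_floor, abs_of_nonneg (Int.fract_nonneg _)] at h

lemma fract_le (k : ℕ) (q : ℤ) (hq0 : q ≠ 0) (hqQ : |q| < (qDen α (k + 1) : ℤ)) :
    Int.fract ((q : ℝ) * α) ≤ 1 - Piq α k := by
  have h := approx_all hirr h0 h1 k q hq0 hqQ (⌊(q : ℝ) * α⌋ + 1)
  have he : ((⌊(q : ℝ) * α⌋ + 1 : ℤ) : ℝ) = ((⌊(q : ℝ) * α⌋ : ℤ) : ℝ) + 1 := by push_cast; ring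
  rw [he, show (q : ℝ) * α - (((⌊(q : ℝ) * α⌋ : ℤ) : ℝ) + 1) = ((q : ℝ) * α - ⌊(q : ℝ) * α⌋) - 1
    by ring, Int.self_sub_floor] at h
  rw [abs_of_nonpos (by linarith [Int.fract_lt_one ((q : ℝ) * α)])] at h
  linarith

omit hirr h0 h1 in
lemma Mset_def (k : ℕ) : dStar α k = 1 - sSup (Mset α k) ∧ dStarStar α k = sInf (Mset α k) :=
  ⟨rfl, rfl⟩


omit hirr h0 h1 in
lemma Mset_finite (k : ℕ) : (Mset α k).Finite := by
  apply Set.Finite.subset (Set.Finite.image (fun q : ℤ => Int.fract ((q : ℝ) * α))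
    (Set.finite_Icc (-1 : ℤ) ((qDen α (k + 1) : ℤ) - 2)))
  rintro x ⟨q, ha, hb, hc, rfl⟩
  exact ⟨q, ⟨ha, hb⟩, rfl⟩

lemma Mset_nonempty (k : ℕ) : (Mset α k).Nonempty := by
  have h2' : (1 : ℤ) ≤ (qDen α (k + 1) : ℤ) := by exact_mod_cast one_le_qDen hirr h0 h1 (k + 1)
  exact ⟨Int.fract (((-1 : ℤ) : ℝ) * α), -1, le_refl _, by omega, by norm_num, rfl⟩

lemma mem_Mset_pos (k : ℕ) (x : ℝ) (hx : x ∈ Mset α k) : 0 < x ∧ x < 1 := by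
  obtain ⟨q, hq1, hq2, hq0, rfl⟩ := hx
  refine ⟨?_, Int.fract_lt_one _⟩
  rw [Int.fract_pos]
  exact Irrational.ne_int (Irrational.intCast_mul hirr hq0) _

lemma sSup_Mset_mem (k : ℕ) : sSup (Mset α k) ∈ Mset α k :=
  (Mset_nonempty hirr h0 h1 k).csSup_mem (Mset_finite k)

lemma sInf_Mset_mem (k : ℕ) : sInf (Mset α k) ∈ Mset α k :=
  (Mset_nonempty hirr h0 h1 k).csInf_mem (Mset_finite k)

lemma dStarStar_pos (k : ℕ) : 0 < dStarStar α k := by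
  rw [(Mset_def (α := α) k).2]
  exact (mem_Mset_pos hirr h0 h1 k _ (sInf_Mset_mem hirr h0 h1 k)).1

lemma dStar_pos (k : ℕ) : 0 < dStar α k := by
  rw [(Mset_def (α := α) k).1]
  have := (mem_Mset_pos hirr h0 h1 k _ (sSup_Mset_mem hirr h0 h1 k)).2
  linarith

lemma delta_le_one (k : ℕ) : dStar α k + dStarStar α k ≤ 1 := by
  rw [(Mset_def (α := α) k).1, (Mset_def (α := α) k).2]
  have h := csInf_le_csSup (Mset_nonempty hirr h0 h1 k) (Mset_finite (α := α) k).bddBelow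
    (Mset_finite (α := α) k).bddAbove
  linarith

lemma abs_lt_of_range (k : ℕ) (hk : 2 ≤ qDen α (k + 1)) (q : ℤ) (hq1 : -1 ≤ q)
    (hq2 : q ≤ (qDen α (k + 1) : ℤ) - 2) (hq0 : q ≠ 0) : |q| < (qDen α (k + 1) : ℤ) := by
  have h2' : (2 : ℤ) ≤ (qDen α (k + 1) : ℤ) := by exact_mod_cast hk
  rw [abs_lt]
  omega

lemma Piq_le_dStarStar (k : ℕ) (hk : 2 ≤ qDen α (k + 1)) : Piq α k ≤ dStarStar α k := by
  rw [(Mset_def (α := α) k).2]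
  apply le_csInf (Mset_nonempty hirr h0 h1 k)
  rintro x ⟨q, hq1, hq2, hq0, rfl⟩
  exact fract_ge hirr h0 h1 k q hq0 (abs_lt_of_range hirr h0 h1 k hk q hq1 hq2 hq0)

lemma Piq_le_dStar (k : ℕ) (hk : 2 ≤ qDen α (k + 1)) : Piq α k ≤ dStar α k := by
  rw [(Mset_def (α := α) k).1]
  have h : sSup (Mset α k) ≤ 1 - Piq α k := by
    apply csSup_le (Mset_nonempty hirr h0 h1 k)
    rintro x ⟨q, hq1, hq2, hq0, rfl⟩
    exact fract_le hirr h0 h1 k q hq0 (abs_lt_of_range hirr h0 h1 k hk q hq1 hq2 hq0)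
  linarith

lemma upper_bounds_d (k : ℕ) (hk : 4 ≤ k) :
    dStar α k ≤ Piq α k + Piq α (k + 1) ∧ dStarStar α k ≤ Piq α k + Piq α (k + 1) := by
  obtain ⟨j, rfl⟩ : ∃ j, k = j + 4 := ⟨k - 4, by omega⟩
  set s : ℝ := Piq α (j + 4) + Piq α (j + 5) with hs_def
  have hP0 := Piq_pos hirr h0 h1 (j + 4)
  have hP1 := Piq_pos hirr h0 h1 (j + 5)
  have hPlt := Piq_lt hirr h0 h1 (j + 4)
  have hq5ge : (j + 4 : ℕ) ≤ qDen α (j + 5) := qDen_ge hirr h0 h1 (j + 4)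
  have hq5ger : (4 : ℝ) ≤ (qDen α (j + 5) : ℝ) := by
    have : (4 : ℕ) ≤ qDen α (j + 5) := by omega
    exact_mod_cast this
  have hPinv := Piq_le_inv hirr h0 h1 (j + 4)
  have hPle : Piq α (j + 4) ≤ 1 / 4 := by
    apply le_trans hPinv
    rw [div_le_div_iff₀ (by linarith) (by norm_num)]
    linarith
  have hs1 : 0 < s := by rw [hs_def]; linarith
  have hs2 : s < 1 := by rw [hs_def]; linarith
  have hPl1 : Piq α (j + 4) < 1 := by linarith
  -- integer quantities
  have hq4ge : (j + 3 : ℕ) ≤ qDen α (j + 4) := qDen_ge hirr h0 h1 (j + 3)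
  have hq3ge : (j + 2 : ℕ) ≤ qDen α (j + 3) := qDen_ge hirr h0 h1 (j + 2)
  have hrec : qDen α (j + 5) = cfDigit α (j + 5) * qDen α (j + 4) + qDen α (j + 3) := rfl
  have hcf : 1 ≤ cfDigit α (j + 5) := one_le_cfDigit hirr h0 h1 (j + 4)
  have hsum : qDen α (j + 4) + qDen α (j + 3) ≤ qDen α (j + 5) := by
    rw [hrec]; nlinarith
  set qa : ℤ := (qDen α (j + 4) : ℤ) with hqa_def
  set qb : ℤ := (qDen α (j + 5) : ℤ) - (qDen α (j + 4) : ℤ) with hqb_def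
  have hQ4 : (j + 3 : ℤ) ≤ qa := by rw [hqa_def]; exact_mod_cast hq4ge
  have hsumz : (qDen α (j + 4) : ℤ) + (qDen α (j + 3) : ℤ) ≤ (qDen α (j + 5) : ℤ) := by
    exact_mod_cast hsum
  have hQ3 : (j + 2 : ℤ) ≤ (qDen α (j + 3) : ℤ) := by exact_mod_cast hq3ge
  have hqa_mem : -1 ≤ qa ∧ qa ≤ (qDen α (j + 4 + 1) : ℤ) - 2 ∧ qa ≠ 0 := by
    refine ⟨by omega, ?_, by omega⟩
    have : (j + 4 + 1) = (j + 5) := by omega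
    rw [this]; omega
  have hqb_mem : -1 ≤ qb ∧ qb ≤ (qDen α (j + 4 + 1) : ℤ) - 2 ∧ qb ≠ 0 := by
    have h45 : (j + 4 + 1) = (j + 5) := by omega
    refine ⟨by omega, ?_, by omega⟩
    rw [h45]; omega
  -- real displacement identities
  have ht0 := theta_eq hirr h0 h1 (j + 4)
  have ht1 := theta_eq hirr h0 h1 (j + 5)
  have h45 : (j + 4 + 1) = (j + 5) := by omega
  rw [h45] at ht1
  -- fract of qa and qb
  rcases Nat.even_or_odd (j + 4) with he | he
  · -- θ_k = +Π_k
    rw [he.neg_one_pow] at ht0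
    have hodd : Odd (j + 5) := by rw [← h45]; exact he.add_one
    rw [hodd.neg_one_pow] at ht1
    have hfa : Int.fract ((qa : ℝ) * α) = Piq α (j + 4) := by
      have hval : (qa : ℝ) * α = (pNum α (j + 4) : ℝ) + Piq α (j + 4) := by
        rw [hqa_def]; push_cast; push_cast at ht0; linarith
      rw [hval, Int.fract_intCast_add, Int.fract_eq_self.2 ⟨hP0.le, hPl1⟩]
    have hfb : Int.fract ((qb : ℝ) * α) = 1 - s := by
      have hval : (qb : ℝ) * α = ((pNum α (j + 5) - pNum α (j + 4) : ℤ) : ℝ) + (-s) := by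
        rw [hqb_def, hs_def]; push_cast; push_cast at ht0 ht1; linarith
      rw [hval, Int.fract_intCast_add, Int.fract_neg, Int.fract_eq_self.2 ⟨hs1.le, hs2⟩]
      rw [Int.fract_eq_self.2 ⟨hs1.le, hs2⟩]
      linarith
    constructor
    · -- dStar ≤ s : sSup ≥ 1 - s
      rw [(Mset_def (α := α) (j + 4)).1]
      have hmem : (1 - s) ∈ Mset α (j + 4) := by
        exact ⟨qb, hqb_mem.1, hqb_mem.2.1, hqb_mem.2.2, hfb.symm⟩
      have := le_csSup (Mset_finite (α := α) (j + 4)).bddAbove hmem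
      linarith
    · rw [(Mset_def (α := α) (j + 4)).2]
      have hmem : Piq α (j + 4) ∈ Mset α (j + 4) := by
        exact ⟨qa, hqa_mem.1, hqa_mem.2.1, hqa_mem.2.2, hfa.symm⟩
      have := csInf_le (Mset_finite (α := α) (j + 4)).bddBelow hmem
      linarith
  · rw [he.neg_one_pow] at ht0
    have heven : Even (j + 5) := by rw [← h45]; exact Odd.add_one he
    rw [heven.neg_one_pow] at ht1
    have hfa : Int.fract ((qa : ℝ) * α) = 1 - Piq α (j + 4) := by
      have hval : (qa : ℝ) * α = (pNum α (j + 4) : ℝ) + (-(Piq α (j + 4))) := by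
        rw [hqa_def]; push_cast; push_cast at ht0; linarith
      rw [hval, Int.fract_intCast_add, Int.fract_neg, Int.fract_eq_self.2 ⟨hP0.le, hPl1⟩]
      rw [Int.fract_eq_self.2 ⟨hP0.le, hPl1⟩]
      linarith
    have hfb : Int.fract ((qb : ℝ) * α) = s := by
      have hval : (qb : ℝ) * α = ((pNum α (j + 5) - pNum α (j + 4) : ℤ) : ℝ) + s := by
        rw [hqb_def, hs_def]; push_cast; push_cast at ht0 ht1; linarith
      rw [hval, Int.fract_intCast_add, Int.fract_eq_self.2 ⟨hs1.le, hs2⟩]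
    constructor
    · rw [(Mset_def (α := α) (j + 4)).1]
      have hmem : (1 - Piq α (j + 4)) ∈ Mset α (j + 4) := by
        exact ⟨qa, hqa_mem.1, hqa_mem.2.1, hqa_mem.2.2, hfa.symm⟩
      have := le_csSup (Mset_finite (α := α) (j + 4)).bddAbove hmem
      linarith
    · rw [(Mset_def (α := α) (j + 4)).2]
      have hmem : s ∈ Mset α (j + 4) := by
        exact ⟨qb, hqb_mem.1, hqb_mem.2.1, hqb_mem.2.2, hfb.symm⟩
      have := csInf_le (Mset_finite (α := α) (j + 4)).bddBelow hmem
      linarith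


lemma fract_sep (k : ℕ) (q q' : ℤ) (hne : q ≠ q') (hq : |q - q'| < (qDen α (k + 1) : ℤ)) :
    Piq α k ≤ |Int.fract ((q : ℝ) * α) - Int.fract ((q' : ℝ) * α)| := by
  have h := approx_all hirr h0 h1 k (q - q') (by omega) hq (⌊(q : ℝ) * α⌋ - ⌊(q' : ℝ) * α⌋)
  have he : Int.fract ((q : ℝ) * α) - Int.fract ((q' : ℝ) * α)
      = ((q - q' : ℤ) : ℝ) * α - ((⌊(q : ℝ) * α⌋ - ⌊(q' : ℝ) * α⌋ : ℤ) : ℝ) := by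
    rw [← Int.self_sub_floor, ← Int.self_sub_floor]
    push_cast
    ring
  rw [he]
  exact h

lemma delta_pos (k : ℕ) : 0 < dStar α k + dStarStar α k := by
  have := dStar_pos hirr h0 h1 k
  have := dStarStar_pos hirr h0 h1 k
  linarith

lemma delta_le (k : ℕ) (hk : 4 ≤ k) : dStar α k + dStarStar α k ≤ 4 / (k : ℝ) := by
  obtain ⟨hu1, hu2⟩ := upper_bounds_d hirr h0 h1 k hk
  have hPlt := Piq_lt hirr h0 h1 k
  have hPinv := Piq_le_inv hirr h0 h1 k
  have hq : (k : ℝ) ≤ (qDen α (k + 1) : ℝ) := by exact_mod_cast qDen_ge hirr h0 h1 k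
  have hkpos : (0 : ℝ) < (k : ℝ) := by
    have : (4 : ℝ) ≤ (k : ℝ) := by exact_mod_cast hk
    linarith
  have hqpos : (0 : ℝ) < (qDen α (k + 1) : ℝ) := by linarith
  have h4 : Piq α k ≤ 1 / (k : ℝ) := by
    apply le_trans hPinv
    apply div_le_div_of_nonneg_left (by norm_num) hkpos hq
  have hP1 := Piq_pos hirr h0 h1 (k + 1)
  have : dStar α k + dStarStar α k ≤ 4 * Piq α k := by linarith
  calc dStar α k + dStarStar α k ≤ 4 * Piq α k := this
    _ ≤ 4 * (1 / (k : ℝ)) := by linarith [Piq_pos hirr h0 h1 k]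
    _ = 4 / (k : ℝ) := by ring

lemma delta_tendsto : Filter.Tendsto (fun k => dStar α k + dStarStar α k) Filter.atTop (nhds 0) := by
  apply tendsto_of_tendsto_of_tendsto_of_le_of_le' tendsto_const_nhds
    (tendsto_const_div_atTop_nhds_zero_nat 4) (Filter.Eventually.of_forall
      (fun k => (delta_pos hirr h0 h1 k).le))
  rw [Filter.eventually_atTop]
  exact ⟨4, fun k hk => delta_le hirr h0 h1 k hk⟩

end CF




section MeasureLemmas

open Metric Filter Topology

lemma meas_Icc_inter_le (T : Set ℝ) (r c c' : ℝ) :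
    volume (Set.Icc (c - r) (c + r) ∩ T) ≤ volume (Set.Icc (c' - r) (c' + r) ∩ T)
      + ENNReal.ofReal (2 * |c - c'|) := by
  have hd0 : 0 ≤ |c - c'| := abs_nonneg _
  have h1 : c - c' ≤ |c - c'| := le_abs_self _
  have h2 : c' - c ≤ |c - c'| := by rw [abs_sub_comm]; exact le_abs_self _
  have hsub : Set.Icc (c - r) (c + r) ∩ T ⊆ (Set.Icc (c' - r) (c' + r) ∩ T)
      ∪ (Set.Icc (c' - r - |c - c'|) (c' - r) ∪ Set.Icc (c' + r) (c' + r + |c - c'|)) := by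
    rintro x ⟨hx, hxT⟩
    obtain ⟨hxa, hxb⟩ := hx
    by_cases hx' : x ∈ Set.Icc (c' - r) (c' + r)
    · exact Or.inl ⟨hx', hxT⟩
    · right
      simp only [Set.mem_Icc, not_and_or, not_le] at hx'
      rcases hx' with h | h
      · left; constructor <;> [linarith; linarith]
      · right; constructor <;> [linarith; linarith]
  calc volume (Set.Icc (c - r) (c + r) ∩ T)
      ≤ volume ((Set.Icc (c' - r) (c' + r) ∩ T)
        ∪ (Set.Icc (c' - r - |c - c'|) (c' - r) ∪ Set.Icc (c' + r) (c' + r + |c - c'|))) :=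
        measure_mono hsub
    _ ≤ volume (Set.Icc (c' - r) (c' + r) ∩ T)
        + volume (Set.Icc (c' - r - |c - c'|) (c' - r) ∪ Set.Icc (c' + r) (c' + r + |c - c'|)) :=
        measure_union_le _ _
    _ ≤ volume (Set.Icc (c' - r) (c' + r) ∩ T)
        + (volume (Set.Icc (c' - r - |c - c'|) (c' - r))
          + volume (Set.Icc (c' + r) (c' + r + |c - c'|))) := by
        gcongr
        exact measure_union_le _ _
    _ ≤ volume (Set.Icc (c' - r) (c' + r) ∩ T) + ENNReal.ofReal (2 * |c - c'|) := by
        gcongr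
        rw [Real.volume_Icc, Real.volume_Icc, ← ENNReal.ofReal_add (by linarith) (by linarith)]
        apply ENNReal.ofReal_le_ofReal
        linarith

lemma meas_Icc_inter_fin (T : Set ℝ) (r c : ℝ) (hr : 0 ≤ r) :
    volume (Set.Icc (c - r) (c + r) ∩ T) ≠ ⊤ := by
  apply ne_top_of_le_ne_top _ (measure_mono Set.inter_subset_left)
  rw [Real.volume_Icc]
  exact ENNReal.ofReal_ne_top

lemma g_lipschitz (T : Set ℝ) (r : ℝ) (hr : 0 ≤ r) (c c' : ℝ) :
    |(volume (Set.Icc (c - r) (c + r) ∩ T)).toReal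
      - (volume (Set.Icc (c' - r) (c' + r) ∩ T)).toReal| ≤ 2 * |c - c'| := by
  have hf1 := meas_Icc_inter_fin T r c hr
  have hf2 := meas_Icc_inter_fin T r c' hr
  rw [abs_le]
  constructor
  · have h := meas_Icc_inter_le T r c' c
    rw [abs_sub_comm] at h
    have := ENNReal.toReal_mono (by finiteness) h
    rw [ENNReal.toReal_add hf1 ENNReal.ofReal_ne_top, ENNReal.toReal_ofReal (by positivity)] at this
    linarith
  · have h := meas_Icc_inter_le T r c c'
    have := ENNReal.toReal_mono (by finiteness) h
    rw [ENNReal.toReal_add hf2 ENNReal.ofReal_ne_top, ENNReal.toReal_ofReal (by positivity)] at this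
    linarith

lemma g_cont (T : Set ℝ) (r : ℝ) (hr : 0 ≤ r) :
    Continuous (fun c => (volume (Set.Icc (c - r) (c + r) ∩ T)).toReal) := by
  apply (LipschitzWith.of_dist_le_mul (K := 2) (fun c c' => ?_)).continuous
  rw [Real.dist_eq, Real.dist_eq]
  push_cast
  exact g_lipschitz T r hr c c'

lemma card_le_of_disjoint_balls {W : Set ℝ} (hWfin : volume W ≠ ⊤)
    (F : Finset ℕ) (c : ℕ → ℝ) (r : ℝ) (hr : 0 < r)
    (hsep : ∀ i ∈ F, ∀ j ∈ F, i ≠ j → 2 * r ≤ |c i - c j|)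
    (hsub : ∀ i ∈ F, Set.Ioo (c i - r) (c i + r) ⊆ W) :
    (F.card : ℝ) * (2 * r) ≤ (volume W).toReal := by
  have hdisj : (F : Set ℕ).PairwiseDisjoint (fun i => Set.Ioo (c i - r) (c i + r)) := by
    intro i hi j hj hij
    have hs := hsep i hi j hj hij
    rw [Function.onFun, Set.Ioo_disjoint_Ioo]
    rcases le_total (c i) (c j) with hle | hle
    · rw [abs_of_nonpos (by linarith)] at hs
      calc min (c i + r) (c j + r) ≤ c i + r := min_le_left _ _
        _ ≤ c j - r := by linarith
        _ ≤ max (c i - r) (c j - r) := le_max_right _ _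
    · rw [abs_of_nonneg (by linarith)] at hs
      calc min (c i + r) (c j + r) ≤ c j + r := min_le_right _ _
        _ ≤ c i - r := by linarith
        _ ≤ max (c i - r) (c j - r) := le_max_left _ _
  have hm : volume (⋃ i ∈ F, Set.Ioo (c i - r) (c i + r))
      = ∑ i ∈ F, volume (Set.Ioo (c i - r) (c i + r)) :=
    measure_biUnion_finset hdisj (fun i _ => measurableSet_Ioo)
  have hsum : ∑ i ∈ F, volume (Set.Ioo (c i - r) (c i + r))
      = F.card • ENNReal.ofReal (2 * r) := by
    rw [Finset.sum_congr rfl (fun i _ => ?_), Finset.sum_const]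
    rw [Real.volume_Ioo]
    congr 1
    ring
  have hle : volume (⋃ i ∈ F, Set.Ioo (c i - r) (c i + r)) ≤ volume W :=
    measure_mono (Set.iUnion₂_subset hsub)
  rw [hm, hsum] at hle
  have h2 := ENNReal.toReal_mono hWfin hle
  rw [nsmul_eq_mul, ENNReal.toReal_mul, ENNReal.toReal_natCast,
    ENNReal.toReal_ofReal (by positivity)] at h2
  exact h2

end MeasureLemmas


section Density

open Metric Filter Topology

noncomputable def delta (α : ℝ) (k : ℕ) : ℝ := dStar α k + dStarStar α k

noncomputable def gfun (S₀ : Set ℝ) (α : ℝ) (k : ℕ) (c : ℝ) : ℝ :=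
  (volume (Set.Icc (c - delta α k / 2) (c + delta α k / 2) ∩ S₀)).toReal

def Wset (S₀ : Set ℝ) (α : ℝ) (ε : ℝ) (k : ℕ) : Set ℝ :=
  {c : ℝ | ε * delta α k / 2 ≤ gfun S₀ α k c ∧ gfun S₀ α k c ≤ (1 - ε / 2) * delta α k}

variable {α : ℝ} (hirr : Irrational α) (h0 : 0 < α) (h1 : α < 1)

include hirr h0 h1

lemma delta_pos' (k : ℕ) : 0 < delta α k := delta_pos hirr h0 h1 k

omit hirr h0 h1 in
lemma Wset_meas (S₀ : Set ℝ) (ε : ℝ) (k : ℕ) (hδ : 0 ≤ delta α k) :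
    MeasurableSet (Wset S₀ α ε k) := by
  have hc := g_cont S₀ (delta α k / 2) (by linarith)
  have : Wset S₀ α ε k
      = (fun c => gfun S₀ α k c) ⁻¹' Set.Icc (ε * delta α k / 2) ((1 - ε / 2) * delta α k) := by
    ext c
    simp [Wset, Set.mem_Icc]
  rw [this]
  exact (isClosed_Icc.preimage hc).measurableSet

lemma Wset_sub (S₀ : Set ℝ) (nn : ℝ) (hS₀sub : S₀ ⊆ Set.Ico (0 : ℝ) nn)
    (ε : ℝ) (hε0 : 0 < ε) (k : ℕ) :
    Wset S₀ α ε k ⊆ Set.Icc (-1 : ℝ) (nn + 1) := by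
  intro c hc
  have hδpos := delta_pos' hirr h0 h1 k
  have hδle : delta α k ≤ 1 := delta_le_one hirr h0 h1 k
  have hg : 0 < gfun S₀ α k c := lt_of_lt_of_le (by positivity) hc.1
  have hne : (Set.Icc (c - delta α k / 2) (c + delta α k / 2) ∩ S₀).Nonempty := by
    by_contra hcon
    rw [Set.not_nonempty_iff_eq_empty] at hcon
    rw [gfun, hcon] at hg
    simp at hg
  obtain ⟨x, hx1, hx2⟩ := hne
  have hx3 := hS₀sub hx2
  obtain ⟨hxa, hxb⟩ := hx1
  obtain ⟨hxc, hxd⟩ := hx3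
  constructor <;> [linarith; linarith]

lemma Wset_tendsto (S₀ : Set ℝ) (hS₀meas : MeasurableSet S₀) (nn : ℝ) (hnn : 0 ≤ nn)
    (hS₀sub : S₀ ⊆ Set.Ico (0 : ℝ) nn) (ε : ℝ) (hε0 : 0 < ε) (hε1 : ε < 1) :
    Tendsto (fun k => (volume (Wset S₀ α ε k)).toReal) atTop (𝓝 0) := by
  have hδpos : ∀ k, 0 < delta α k := delta_pos' hirr h0 h1
  have hδto : Tendsto (delta α) atTop (𝓝 0) := delta_tendsto hirr h0 h1
  have hWmeas : ∀ k, MeasurableSet (Wset S₀ α ε k) :=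
    fun k => Wset_meas S₀ ε k (hδpos k).le
  have hWsub : ∀ k, Wset S₀ α ε k ⊆ Set.Icc (-1 : ℝ) (nn + 1) :=
    fun k => Wset_sub hirr h0 h1 S₀ nn hS₀sub ε hε0 k
  have hWfin : ∀ k, volume (Wset S₀ α ε k) < ⊤ := by
    intro k
    apply lt_of_le_of_lt (measure_mono (hWsub k))
    rw [Real.volume_Icc]
    exact ENNReal.ofReal_lt_top
  have hIccInt : Integrable ((Set.Icc (-1 : ℝ) (nn + 1)).indicator (fun _ => (1 : ℝ))) := by
    rw [integrable_indicator_iff measurableSet_Icc]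
    exact integrableOn_const (by
      rw [Real.volume_Icc]
      exact ENNReal.ofReal_ne_top)
  have hFk : ∀ k : ℕ, Integrable ((Wset S₀ α ε k).indicator (fun _ => (1 : ℝ))) := by
    intro k
    rw [integrable_indicator_iff (hWmeas k)]
    exact integrableOn_const (hWfin k).ne
  have hae : ∀ᵐ c : ℝ, Tendsto (fun k => (Wset S₀ α ε k).indicator (fun _ => (1 : ℝ)) c)
      atTop (𝓝 0) := by
    filter_upwards [Besicovitch.ae_tendsto_measure_inter_div_of_measurableSet volume hS₀meas]
      with c hc
    have hrt : Tendsto (fun k => delta α k / 2) atTop (𝓝[>] (0 : ℝ)) := by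
      rw [tendsto_nhdsWithin_iff]
      constructor
      · have := hδto.div_const 2
        simpa using this
      · exact Eventually.of_forall (fun k => Set.mem_Ioi.2 (half_pos (hδpos k)))
    have hcomp := hc.comp hrt
    have hBeq : ∀ k : ℕ, volume (S₀ ∩ closedBall c (delta α k / 2))
        = volume (Set.Icc (c - delta α k / 2) (c + delta α k / 2) ∩ S₀) := by
      intro k
      rw [Real.closedBall_eq_Icc, Set.inter_comm]
    have hBvol : ∀ k : ℕ, volume (closedBall c (delta α k / 2))
        = ENNReal.ofReal (delta α k) := by
      intro k
      rw [Real.volume_closedBall]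
      congr 1
      ring
    have hratio : ∀ k : ℕ, (volume (S₀ ∩ closedBall c (delta α k / 2))
          / volume (closedBall c (delta α k / 2))).toReal
        = gfun S₀ α k c / delta α k := by
      intro k
      rw [ENNReal.toReal_div, hBeq, hBvol, ENNReal.toReal_ofReal (hδpos k).le]
      rfl
    by_cases hcS : c ∈ S₀
    · have hind : S₀.indicator (1 : ℝ → ENNReal) c = 1 := by simp [hcS]
      rw [hind] at hcomp
      have hcomp1 : Tendsto (fun k => gfun S₀ α k c / delta α k) atTop (𝓝 1) := by
        have h2 := (ENNReal.tendsto_toReal (a := 1) ENNReal.one_ne_top).comp hcomp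
        simp only [Function.comp_def, ENNReal.toReal_one] at h2
        have heq2 : (fun k => (volume (S₀ ∩ closedBall c (delta α k / 2))
            / volume (closedBall c (delta α k / 2))).toReal)
            = fun k => gfun S₀ α k c / delta α k := funext hratio
        rwa [heq2] at h2
      have hev : ∀ᶠ k in atTop, 1 - ε / 2 < gfun S₀ α k c / delta α k :=
        hcomp1.eventually (eventually_gt_nhds (by linarith))
      refine Filter.Tendsto.congr' ?_ (tendsto_const_nhds :
        Tendsto (fun _ : ℕ => (0 : ℝ)) atTop (𝓝 0))
      filter_upwards [hev] with k hk
      have hlt : (1 - ε / 2) * delta α k < gfun S₀ α k c := (lt_div_iff₀ (hδpos k)).1 hk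
      have hnotW : c ∉ Wset S₀ α ε k := fun hW => absurd hW.2 (not_le.2 hlt)
      simp [hnotW]
    · have hind : S₀.indicator (1 : ℝ → ENNReal) c = 0 := by simp [hcS]
      rw [hind] at hcomp
      have hcomp1 : Tendsto (fun k => gfun S₀ α k c / delta α k) atTop (𝓝 0) := by
        have h2 := (ENNReal.tendsto_toReal (a := 0) ENNReal.zero_ne_top).comp hcomp
        simp only [Function.comp_def, ENNReal.toReal_zero] at h2
        have heq2 : (fun k => (volume (S₀ ∩ closedBall c (delta α k / 2))
            / volume (closedBall c (delta α k / 2))).toReal)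
            = fun k => gfun S₀ α k c / delta α k := funext hratio
        rwa [heq2] at h2
      have hev : ∀ᶠ k in atTop, gfun S₀ α k c / delta α k < ε / 2 :=
        hcomp1.eventually (eventually_lt_nhds (by linarith))
      refine Filter.Tendsto.congr' ?_ (tendsto_const_nhds :
        Tendsto (fun _ : ℕ => (0 : ℝ)) atTop (𝓝 0))
      filter_upwards [hev] with k hk
      have hlt : gfun S₀ α k c < ε * delta α k / 2 := by
        have := (div_lt_iff₀ (hδpos k)).1 hk
        calc gfun S₀ α k c < ε / 2 * delta α k := this
          _ = ε * delta α k / 2 := by ring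
      have hnotW : c ∉ Wset S₀ α ε k := fun hW => absurd hW.1 (not_le.2 hlt)
      simp [hnotW]
  have hda := MeasureTheory.tendsto_integral_of_dominated_convergence
    (μ := volume) (bound := (Set.Icc (-1 : ℝ) (nn + 1)).indicator (fun _ => (1 : ℝ)))
    (F := fun k => (Wset S₀ α ε k).indicator (fun _ => (1 : ℝ))) (f := fun _ => (0 : ℝ))
    (fun k => (hFk k).aestronglyMeasurable) hIccInt ?_ hae
  · have heq : ∀ k : ℕ, ∫ a, (Wset S₀ α ε k).indicator (fun _ => (1 : ℝ)) a ∂volume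
        = (volume (Wset S₀ α ε k)).toReal := by
      intro k
      exact MeasureTheory.integral_indicator_one (hWmeas k)
    simp only [integral_zero] at hda
    simp only [heq] at hda
    exact hda
  · intro k
    apply Eventually.of_forall
    intro a
    by_cases haW : a ∈ Wset S₀ α ε k
    · have := hWsub k haW
      simp [haW, this]
    · simp [haW]
      apply Set.indicator_nonneg
      intro x _
      norm_num

end Density


end AZOL

open AZOL Filter Topology

set_option maxHeartbeats 2000000 in
/-- Lemma 4.3. Let `α ∈ (0,1)` be irrational, `n ≥ 2`, `m ≥ 2`,
`S₀ ⊆ [0,n)` measurable and `0 < ε < 1/100`. Then for all sufficiently large `k`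
there is `q*` with `m ≤ q* ≤ q_{k+1}−2` such that each translate `ℓ + J_k(q*)`,
`0 ≤ ℓ ≤ n−1`, meets `S₀` in measure either more than `(1−ε)·λ(J_k(q*))` or less
than `ε·λ(J_k(q*))`. -/
theorem almost_zero_one_law_on_short_intervals (α : ℝ) (hirr : Irrational α)
    (h0 : 0 < α) (h1 : α < 1) (n m : ℕ) (hn : 2 ≤ n) (hm : 2 ≤ m)
    (S₀ : Set ℝ) (hS₀sub : S₀ ⊆ Set.Ico (0 : ℝ) (n : ℝ)) (hS₀meas : MeasurableSet S₀)
    (ε : ℝ) (hε0 : 0 < ε) (hε1 : ε < 1 / 100) :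
    ∃ K : ℕ, ∀ k : ℕ, K ≤ k →
      ∃ q' : ℕ, m ≤ q' ∧ (q' : ℤ) ≤ (qDen α (k + 1) : ℤ) - 2 ∧
        ∀ ℓ : ℕ, ℓ < n →
          (1 - ε) * (volume (shortInterval α k q')).toReal
              < (volume ((fun x => (ℓ : ℝ) + x) '' shortInterval α k q' ∩ S₀)).toReal ∨
          (volume ((fun x => (ℓ : ℝ) + x) '' shortInterval α k q' ∩ S₀)).toReal
              < ε * (volume (shortInterval α k q')).toReal := by
  have hε1' : ε < 1 := by linarith
  have hnpos : (0 : ℝ) < n := by exact_mod_cast Nat.lt_of_lt_of_le Nat.zero_lt_two hn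
  have hWto := Wset_tendsto hirr h0 h1 S₀ hS₀meas (n : ℝ) hnpos.le hS₀sub ε hε0 hε1'
  have hεn : (0 : ℝ) < ε / (16 * n) := by positivity
  obtain ⟨K₁, hK₁⟩ := eventually_atTop.1 (hWto.eventually (eventually_lt_nhds hεn))
  refine ⟨max K₁ (4 * m + 20), fun k hk => ?_⟩
  have hkK₁ : K₁ ≤ k := le_trans (le_max_left _ _) hk
  have hkm : 4 * m + 20 ≤ k := le_trans (le_max_right _ _) hk
  have hk4 : 4 ≤ k := by omega
  -- abbreviations
  set Q : ℕ := qDen α (k + 1) with hQ_def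
  have hQk : k ≤ Q := qDen_ge hirr h0 h1 k
  have hQbig : 4 * m + 20 ≤ Q := le_trans hkm hQk
  have hQ2 : 2 ≤ Q := by omega
  set δ : ℝ := delta α k with hδ_def
  set Pk : ℝ := Piq α k with hPk_def
  have hPkpos : 0 < Pk := Piq_pos hirr h0 h1 k
  have hδpos : 0 < δ := delta_pos hirr h0 h1 k
  have hle2P : 2 * Pk ≤ δ := by
    have h5 := Piq_le_dStar hirr h0 h1 k hQ2
    have h6 := Piq_le_dStarStar hirr h0 h1 k hQ2
    rw [hδ_def, delta]
    rw [← hPk_def] at h5 h6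
    linarith
  have hPinv : 1 / (2 * (Q : ℝ)) ≤ Pk := inv_le_Piq hirr h0 h1 k
  have hQr : (0 : ℝ) < (Q : ℝ) := by
    have : 0 < Q := by omega
    exact_mod_cast this
  -- the interval centers
  set cen : ℕ → ℝ := fun q => Int.fract ((q : ℝ) * α) + (dStar α k - dStarStar α k) / 2
    with hcen_def
  set r' : ℝ := min (ε * δ / 4) (Pk / 2) with hr'_def
  have hr'pos : 0 < r' := by
    apply lt_min
    · positivity
    · positivity
  have h2r'P : ε * Pk ≤ 2 * r' := by
    rw [hr'_def]
    rcases min_cases (ε * δ / 4) (Pk / 2) with ⟨hmin, _⟩ | ⟨hmin, _⟩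
    · rw [hmin]; nlinarith
    · rw [hmin]; nlinarith
  have h2r'ε : 2 * r' ≤ ε * δ / 2 := by
    rw [hr'_def]
    have := min_le_left (ε * δ / 4) (Pk / 2)
    linarith
  have h2r'Pk : 2 * r' ≤ Pk := by
    rw [hr'_def]
    have := min_le_right (ε * δ / 4) (Pk / 2)
    linarith
  set F : Finset ℕ := Finset.Icc m (Q - 2) with hF_def
  set Bad : ℕ → Finset ℕ := fun ℓ => F.filter (fun q =>
    ε * δ ≤ gfun S₀ α k ((ℓ : ℝ) + cen q) ∧ gfun S₀ α k ((ℓ : ℝ) + cen q) ≤ (1 - ε) * δ)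
    with hBad_def
  set w : ℝ := (volume (Wset S₀ α ε k)).toReal with hw_def
  have hw : w < ε / (16 * n) := hK₁ k hkK₁
  have hwnn : 0 ≤ w := ENNReal.toReal_nonneg
  have hWfin : volume (Wset S₀ α ε k) ≠ ⊤ := by
    apply ne_top_of_le_ne_top _ (measure_mono (Wset_sub hirr h0 h1 S₀ (n : ℝ) hS₀sub ε hε0 k))
    rw [Real.volume_Icc]
    exact ENNReal.ofReal_ne_top
  -- separation of centers
  have hsep : ∀ q ∈ F, ∀ q'' ∈ F, q ≠ q'' → Pk ≤ |cen q - cen q''| := by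
    intro q hq q'' hq'' hne
    rw [Finset.mem_Icc] at hq hq''
    have hlt : |(q : ℤ) - (q'' : ℤ)| < ((qDen α (k + 1) : ℕ) : ℤ) := by
      have h7 : (q : ℤ) ≤ (Q : ℤ) - 2 := by
        have : q ≤ Q - 2 := hq.2
        omega
      have h8 : (q'' : ℤ) ≤ (Q : ℤ) - 2 := by
        have : q'' ≤ Q - 2 := hq''.2
        omega
      rw [← hQ_def, abs_lt]
      omega
    have h9 := fract_sep hirr h0 h1 k (q : ℤ) (q'' : ℤ) (by exact_mod_cast hne) hlt
    have h10 : cen q - cen q'' = Int.fract (((q : ℤ) : ℝ) * α) - Int.fract (((q'' : ℤ) : ℝ) * α) := by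
      rw [hcen_def]
      push_cast
      ring
    rw [h10]
    rw [hPk_def]
    exact h9
  -- counting for a fixed ℓ
  have hcount : ∀ ℓ : ℕ, ((Bad ℓ).card : ℝ) * (ε * Pk) ≤ w := by
    intro ℓ
    have hcl := card_le_of_disjoint_balls (W := Wset S₀ α ε k) hWfin (Bad ℓ)
      (fun q => (ℓ : ℝ) + cen q) r' hr'pos ?_ ?_
    · calc ((Bad ℓ).card : ℝ) * (ε * Pk) ≤ ((Bad ℓ).card : ℝ) * (2 * r') := by
            apply mul_le_mul_of_nonneg_left h2r'P (Nat.cast_nonneg _)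
        _ ≤ w := hcl
    · intro i hi j hj hij
      have hiF : i ∈ F := Finset.mem_of_mem_filter i hi
      have hjF : j ∈ F := Finset.mem_of_mem_filter j hj
      have := hsep i hiF j hjF hij
      have heq : ((fun q => (ℓ : ℝ) + cen q) i) - ((fun q => (ℓ : ℝ) + cen q) j)
          = cen i - cen j := by simp
      rw [heq]
      linarith
    · intro i hi
      rw [hBad_def, Finset.mem_filter] at hi
      obtain ⟨hiF, hgl, hgu⟩ := hi
      intro x hx
      obtain ⟨hx1, hx2⟩ := hx
      have hxd : |x - ((ℓ : ℝ) + cen i)| ≤ r' := by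
        rw [abs_le]
        constructor <;> [linarith; linarith]
      have hlip := g_lipschitz S₀ (δ / 2) (by linarith) x ((ℓ : ℝ) + cen i)
      have hlip2 : |gfun S₀ α k x - gfun S₀ α k ((ℓ : ℝ) + cen i)| ≤ 2 * r' := by
        rw [gfun, gfun]
        calc |(volume (Set.Icc (x - delta α k / 2) (x + delta α k / 2) ∩ S₀)).toReal
            - (volume (Set.Icc ((ℓ : ℝ) + cen i - delta α k / 2)
              ((ℓ : ℝ) + cen i + delta α k / 2) ∩ S₀)).toReal| ≤ 2 * |x - ((ℓ : ℝ) + cen i)| :=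
            hlip
          _ ≤ 2 * r' := by linarith [hxd]
      rw [abs_le] at hlip2
      constructor
      · have : ε * delta α k / 2 ≤ gfun S₀ α k x := by
          rw [← hδ_def]
          linarith
        exact this
      · show gfun S₀ α k x ≤ (1 - ε / 2) * delta α k
        rw [← hδ_def]
        nlinarith
  -- total count
  set B : Finset ℕ := (Finset.range n).biUnion Bad with hB_def
  have hBF : B ⊆ F := by
    rw [hB_def]
    apply Finset.biUnion_subset.2
    intro ℓ _
    exact Finset.filter_subset _ _
  have hεP : 0 < ε * Pk := by positivity
  have hBcard : (B.card : ℝ) * (ε * Pk) ≤ (n : ℝ) * w := by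
    have h11 : (B.card : ℝ) ≤ ∑ ℓ ∈ Finset.range n, ((Bad ℓ).card : ℝ) := by
      have := Finset.card_biUnion_le (s := Finset.range n) (t := Bad)
      rw [← hB_def] at this
      exact_mod_cast this
    calc (B.card : ℝ) * (ε * Pk) ≤ (∑ ℓ ∈ Finset.range n, ((Bad ℓ).card : ℝ)) * (ε * Pk) :=
        mul_le_mul_of_nonneg_right h11 hεP.le
      _ = ∑ ℓ ∈ Finset.range n, ((Bad ℓ).card : ℝ) * (ε * Pk) := Finset.sum_mul _ _ _
      _ ≤ ∑ ℓ ∈ Finset.range n, w := Finset.sum_le_sum (fun ℓ _ => hcount ℓ)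
      _ = (n : ℝ) * w := by rw [Finset.sum_const, Finset.card_range, nsmul_eq_mul]
  have hFcard : F.card = Q - 1 - m := by
    rw [hF_def, Nat.card_Icc]
    omega
  have hFc2 : Q ≤ 2 * F.card := by omega
  have hFcard_lb : (Q : ℝ) / 2 ≤ (F.card : ℝ) := by
    have : (Q : ℝ) ≤ 2 * (F.card : ℝ) := by exact_mod_cast hFc2
    linarith
  have hFbound : ε / 4 ≤ (F.card : ℝ) * (ε * Pk) := by
    have h12 : ε / (2 * (Q : ℝ)) ≤ ε * Pk := by
      calc ε / (2 * (Q : ℝ)) = ε * (1 / (2 * (Q : ℝ))) := by ring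
        _ ≤ ε * Pk := mul_le_mul_of_nonneg_left hPinv hε0.le
    calc ε / 4 = ((Q : ℝ) / 2) * (ε / (2 * (Q : ℝ))) := by field_simp; ring
      _ ≤ (F.card : ℝ) * (ε * Pk) := by
        apply mul_le_mul hFcard_lb h12 (by positivity) (Nat.cast_nonneg _)
  have hnw : (n : ℝ) * w < ε / 16 := by
    have h14 := mul_lt_mul_of_pos_left hw hnpos
    have hn0 : (n : ℝ) ≠ 0 := ne_of_gt hnpos
    calc (n : ℝ) * w < (n : ℝ) * (ε / (16 * n)) := h14
      _ = ε / 16 := by field_simp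
  have hcardlt : B.card < F.card := by
    have hr : (B.card : ℝ) * (ε * Pk) < (F.card : ℝ) * (ε * Pk) := by
      calc (B.card : ℝ) * (ε * Pk) ≤ (n : ℝ) * w := hBcard
        _ < ε / 16 := hnw
        _ < ε / 4 := by linarith
        _ ≤ (F.card : ℝ) * (ε * Pk) := hFbound
    have h13 : (B.card : ℝ) < (F.card : ℝ) := lt_of_mul_lt_mul_right hr hεP.le
    exact_mod_cast h13
  -- pick a good q
  have hne : (F \ B).Nonempty := by
    rw [← Finset.card_pos, Finset.card_sdiff_of_subset hBF]
    omega
  obtain ⟨q, hqmem⟩ := hne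
  rw [Finset.mem_sdiff] at hqmem
  obtain ⟨hqF, hqB⟩ := hqmem
  rw [hF_def, Finset.mem_Icc] at hqF
  refine ⟨q, hqF.1, ?_, ?_⟩
  · have : q ≤ Q - 2 := hqF.2
    omega
  · intro ℓ hℓ
    have hqBad : q ∉ Bad ℓ := by
      intro hc
      exact hqB (Finset.mem_biUnion.2 ⟨ℓ, Finset.mem_range.2 hℓ, hc⟩)
    rw [hBad_def, Finset.mem_filter] at hqBad
    push_neg at hqBad
    have hqF' : q ∈ F := by rw [hF_def, Finset.mem_Icc]; exact hqF
    -- measure computations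
    have hvolJ : (volume (shortInterval α k q)).toReal = δ := by
      rw [shortInterval, Real.volume_Ioo]
      rw [ENNReal.toReal_ofReal (by rw [hδ_def, delta] at hδpos; linarith)]
      rw [hδ_def, delta]
      ring
    have himage : (fun x => (ℓ : ℝ) + x) '' shortInterval α k q
        = Set.Ioo ((ℓ : ℝ) + (Int.fract ((q : ℝ) * α) - dStarStar α k))
          ((ℓ : ℝ) + (Int.fract ((q : ℝ) * α) + dStar α k)) := by
      rw [shortInterval]
      exact Set.image_const_add_Ioo _ _ _
    have hvol2 : (volume ((fun x => (ℓ : ℝ) + x) '' shortInterval α k q ∩ S₀)).toReal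
        = gfun S₀ α k ((ℓ : ℝ) + cen q) := by
      rw [himage]
      rw [gfun]
      have he1 : (ℓ : ℝ) + cen q - delta α k / 2
          = (ℓ : ℝ) + (Int.fract ((q : ℝ) * α) - dStarStar α k) := by
        rw [hcen_def, delta]; ring
      have he2 : (ℓ : ℝ) + cen q + delta α k / 2
          = (ℓ : ℝ) + (Int.fract ((q : ℝ) * α) + dStar α k) := by
        rw [hcen_def, delta]; ring
      rw [he1, he2]
      congr 1
      apply measure_congr
      exact Filter.EventuallyEq.inter MeasureTheory.Ioo_ae_eq_Icc (Filter.EventuallyEq.refl _ _)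
    rw [hvolJ, hvol2]
    by_cases hcase : ε * δ ≤ gfun S₀ α k ((ℓ : ℝ) + cen q)
    · left
      exact hqBad hqF' hcase
    · right
      linarith [lt_of_not_ge hcase]
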